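/- Let p ≡ q ≡ 1 (mod 4) be distinct primes with (p/q) = 1, and suppose p = r² + q·s² for integers r, s. Then (p/q)₄·(q/p)₄ = (2/q)^s. -/

import Mathlib

set_option maxRecDepth 8000

/-- The rational quartic residue symbol `(m/p)₄ = m^((p−1)/4) mod p`, recorded as an
integer: it is `1` or `−1` when `m^((p−1)/4) = ±1` in `ZMod p`, and `0` otherwise. -/
def quarticSym (p : ℕ) (m : ℤ) : ℤ :=
  if (m : ZMod p) ^ ((p - 1) / 4) = 1 then 1
  else if (m : ZMod p) ^ ((p - 1) / 4) = -1 then -1 else 0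

lemma quarticSym_eq (q : ℕ) [Fact q.Prime] (hq : 5 ≤ q) (m e : ℤ)
    (he : e = 1 ∨ e = -1) (hm : (m : ZMod q) ^ ((q - 1) / 4) = (e : ZMod q)) :
    quarticSym q m = e := by
  haveI : Fact (2 < q) := ⟨by omega⟩
  rcases he with rfl | rfl
  · simp only [Int.cast_one] at hm
    simp [quarticSym, hm]
  · simp only [Int.cast_neg, Int.cast_one] at hm
    simp [quarticSym, hm, ZMod.neg_one_ne_one]

lemma legendreSym_pow (p : ℕ) [Fact p.Prime] (a : ℤ) (n : ℕ) :
    legendreSym p (a ^ n) = legendreSym p a ^ n := by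
  rw [jacobiSym.legendreSym.to_jacobiSym, jacobiSym.pow_left, ← jacobiSym.legendreSym.to_jacobiSym]

lemma leg_natAbs (p : ℕ) [Fact p.Prime] (hp : p % 4 = 1) (a : ℤ) :
    legendreSym p a = legendreSym p a.natAbs := by
  rcases Int.natAbs_eq a with h | h
  · rw [← h]
  · rw [h, show (-(a.natAbs : ℤ)) = -1 * a.natAbs by ring, legendreSym.mul,
      legendreSym.at_neg_one (by omega), ZMod.χ₄_nat_eq_if_mod_four, hp]
    have h2 : p % 2 = 1 := by omega
    simp [h2]

lemma odd_sq_mod_eight {t : ℕ} (ht : Odd t) : t ^ 2 % 8 = 1 := by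
  obtain ⟨k, rfl⟩ := ht
  have h2 : (2 * k + 1) ^ 2 = 4 * (k * (k + 1)) + 1 := by ring
  obtain ⟨m, hm⟩ := Nat.even_mul_succ_self k
  omega

lemma leg_eq_one_of_dvd (p : ℕ) [Fact p.Prime] (hp4 : p % 4 = 1) (r : ℤ) (m : ℕ) (hm : Odd m)
    (hdvd : (m:ℤ) ∣ ((p:ℤ) - r^2)) (hcop : Int.gcd r m = 1) :
    legendreSym p (m:ℤ) = 1 := by
  rw [jacobiSym.legendreSym.to_jacobiSym,
    ← jacobiSym.quadratic_reciprocity_one_mod_four hp4 hm]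
  have hmod : ((p:ℤ)) % m = (r^2) % m := Int.ModEq.symm (Int.modEq_iff_dvd.mpr (by
    simpa using hdvd))
  rw [jacobiSym.mod_left' hmod, jacobiSym.sq_one' hcop]

lemma leg_eq_leg (p q : ℕ) [Fact p.Prime] [Fact q.Prime] (hp4 : p % 4 = 1) (hq4 : q % 4 = 1)
    (c : ℤ) (m : ℕ) (hm : Odd m)
    (hdvd : (m:ℤ) ∣ ((p:ℤ) - q * c^2)) (hcop : Int.gcd c m = 1) :
    legendreSym p (m:ℤ) = legendreSym q (m:ℤ) := by
  rw [jacobiSym.legendreSym.to_jacobiSym, jacobiSym.legendreSym.to_jacobiSym,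
    ← jacobiSym.quadratic_reciprocity_one_mod_four hp4 hm,
    ← jacobiSym.quadratic_reciprocity_one_mod_four hq4 hm]
  have hmod : ((p:ℤ)) % m = ((q:ℤ) * c^2) % m := Int.ModEq.symm (Int.modEq_iff_dvd.mpr (by
    simpa using hdvd))
  rw [jacobiSym.mod_left' hmod, jacobiSym.mul_left, jacobiSym.sq_one' hcop, mul_one]

lemma neg_one_pow_eq_leg_two (p : ℕ) [Fact p.Prime] (hp4 : p % 4 = 1) :
    ((-1:ℤ))^((p-1)/4) = legendreSym p 2 := by
  rw [legendreSym.at_two (by omega), ZMod.χ₈_nat_eq_if_mod_eight]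
  rcases show p % 8 = 1 ∨ p % 8 = 5 by omega with h8 | h8
  · rw [(Nat.even_iff.mpr (by omega : (p-1)/4 % 2 = 0)).neg_one_pow]
    simp [h8, show p % 2 = 1 by omega]
  · rw [(Nat.odd_iff.mpr (by omega : (p-1)/4 % 2 = 1)).neg_one_pow]
    simp [h8, show p % 2 = 1 by omega]

lemma leg_two_congr (p q : ℕ) [Fact p.Prime] [Fact q.Prime] (h8 : p % 8 = q % 8)
    (hp2 : p % 2 = 1) : legendreSym p 2 = legendreSym q 2 := by
  have hq2 : q % 2 = 1 := by omega
  rw [legendreSym.at_two (by omega), legendreSym.at_two (by omega),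
    ZMod.χ₈_nat_eq_if_mod_eight, ZMod.χ₈_nat_eq_if_mod_eight, h8, show p % 2 = q % 2 by omega]
lemma quartic_left (p q : ℕ) [Fact p.Prime] [Fact q.Prime] (hq4 : q % 4 = 1) (hq5 : 5 ≤ q)
    (r s : ℤ) (h : (p : ℤ) = r ^ 2 + q * s ^ 2) (hqr : ¬ (q:ℤ) ∣ r) :
    quarticSym q (p : ℤ) = legendreSym q r := by
  have hr0 : (r : ZMod q) ≠ 0 := by
    rw [Ne, ZMod.intCast_zmod_eq_zero_iff_dvd]; exact hqr
  apply quarticSym_eq q hq5 _ _ (legendreSym.eq_one_or_neg_one q hr0)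
  have hcast : (((p:ℤ)) : ZMod q) = (r : ZMod q) ^ 2 := by
    have := congrArg (fun z : ℤ => (z : ZMod q)) h
    push_cast at this
    simpa using this
  rw [hcast, ← pow_mul, show 2 * ((q-1)/4) = q / 2 by omega, legendreSym.eq_pow]

lemma quartic_right (p q : ℕ) [Fact p.Prime] [Fact q.Prime] (hp4 : p % 4 = 1) (hp5 : 5 ≤ p)
    (r s : ℤ) (h : (p : ℤ) = r ^ 2 + q * s ^ 2) (hpr : ¬ (p:ℤ) ∣ r) (hps : ¬ (p:ℤ) ∣ s) :
    quarticSym p (q : ℤ) = (-1)^((p-1)/4) * legendreSym p r * legendreSym p s := by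
  have hr0 : (r : ZMod p) ≠ 0 := by rw [Ne, ZMod.intCast_zmod_eq_zero_iff_dvd]; exact hpr
  have hs0 : (s : ZMod p) ≠ 0 := by rw [Ne, ZMod.intCast_zmod_eq_zero_iff_dvd]; exact hps
  set k := (p-1)/4 with hk
  have h2k : 2 * k = p / 2 := by omega
  have he : ((-1:ℤ))^k * legendreSym p r * legendreSym p s = 1 ∨
      ((-1:ℤ))^k * legendreSym p r * legendreSym p s = -1 := by
    rcases legendreSym.eq_one_or_neg_one p hr0 with h1 | h1 <;>
    rcases legendreSym.eq_one_or_neg_one p hs0 with h2 | h2 <;>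
    rcases Nat.even_or_odd k with h3 | h3 <;>
      simp [h1, h2, h3.neg_one_pow]
  apply quarticSym_eq p hp5 _ _ he
  have hcast : ((q:ℕ) : ZMod p) * (s : ZMod p) ^ 2 = -((r : ZMod p) ^ 2) := by
    have := congrArg (fun z : ℤ => (z : ZMod p)) h
    push_cast at this
    rw [ZMod.natCast_self] at this
    linear_combination -this
  have hLs : ((legendreSym p s : ℤ) : ZMod p) ^ 2 = 1 := by
    rw [← Int.cast_pow, legendreSym.sq_one p hs0, Int.cast_one]
  have e1 : ((q:ℕ):ZMod p)^k * (s:ZMod p)^(2*k) = (-1:ZMod p)^k * (r:ZMod p)^(2*k) := by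
    calc ((q:ℕ):ZMod p)^k * (s:ZMod p)^(2*k)
        = (((q:ℕ):ZMod p) * (s:ZMod p)^2)^k := by rw [mul_pow, pow_mul]
      _ = ((-1:ZMod p) * (r:ZMod p)^2)^k := by rw [hcast, neg_one_mul]
      _ = (-1:ZMod p)^k * (r:ZMod p)^(2*k) := by rw [mul_pow, pow_mul]
  rw [h2k, ← legendreSym.eq_pow, ← legendreSym.eq_pow] at e1
  have e2 := congrArg (· * ((legendreSym p s : ℤ):ZMod p)) e1
  try simp only at e2
  rw [mul_assoc, ← sq, hLs, mul_one] at e2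
  push_cast
  rw [show ((p-1)/4) = k from rfl, e2]
/-- [L, Ex. 5.6]: let `p ≡ q ≡ 1 (mod 4)` be distinct primes with
`(p/q) = 1` and suppose `p = r² + q s²`.  Then `(p/q)₄·(q/p)₄ = (2/q)^s`. -/
theorem quartic_reciprocity_rep_form (p q : ℕ) [Fact p.Prime] [Fact q.Prime] (hne : p ≠ q)
    (hp4 : p % 4 = 1) (hq4 : q % 4 = 1) (hpq : legendreSym q p = 1)
    (r s : ℤ) (h : (p : ℤ) = r ^ 2 + q * s ^ 2) :
    quarticSym q (p : ℤ) * quarticSym p (q : ℤ) = (legendreSym q 2) ^ s.natAbs := by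
  have hp : p.Prime := Fact.out
  have hq : q.Prime := Fact.out
  have hp5 : 5 ≤ p := by have := hp.two_le; omega
  have hq5 : 5 ≤ q := by have := hq.two_le; omega
  have hp2 : p % 2 = 1 := by omega
  have hq2n : q % 2 = 1 := by omega
  have hqr : ¬ (q:ℤ) ∣ r := by
    intro hd
    have h1 : (q:ℤ) ∣ (p:ℤ) := by
      rw [h]; exact dvd_add (dvd_pow hd two_ne_zero) (Dvd.intro _ rfl)
    have h2 : q ∣ p := by exact_mod_cast h1
    exact hne ((Nat.prime_dvd_prime_iff_eq hq hp).mp h2).symm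
  have hboth : ¬ ((p:ℤ) ∣ r ∧ (p:ℤ) ∣ s) := by
    rintro ⟨⟨r', rfl⟩, ⟨s', rfl⟩⟩
    have hp0 : (p:ℤ) ≠ 0 := by positivity
    have h1 : (1:ℤ) = p * r'^2 + q * (p * s'^2) := by
      apply mul_left_cancel₀ hp0
      linear_combination h
    have h2 : (p:ℤ) ∣ 1 := by
      rw [h1]
      exact dvd_add ⟨r'^2, by ring⟩ ⟨q * s'^2, by ring⟩
    have := Int.le_of_dvd one_pos h2
    have : (5:ℤ) ≤ p := by exact_mod_cast hp5
    omega
  have hps : ¬ (p:ℤ) ∣ s := by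
    intro hd
    apply hboth
    refine ⟨?_, hd⟩
    have h2 : (p:ℤ) ∣ r^2 := by
      have h3 : (p:ℤ) ∣ q * s^2 := (dvd_pow hd two_ne_zero).mul_left q
      have h4 : r^2 = (p:ℤ) - q * s^2 := by rw [h]; ring
      rw [h4]; exact dvd_sub dvd_rfl h3
    exact (Nat.prime_iff_prime_int.mp hp).dvd_of_dvd_pow h2
  have hpr : ¬ (p:ℤ) ∣ r := by
    intro hd
    have h2 : (p:ℤ) ∣ q * s^2 := by
      have h4 : (q:ℤ) * s^2 = (p:ℤ) - r^2 := by rw [h]; ring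
      rw [h4]; exact dvd_sub dvd_rfl (dvd_pow hd two_ne_zero)
    rcases (Nat.prime_iff_prime_int.mp hp).dvd_mul.mp h2 with hq' | hs'
    · have : p ∣ q := by exact_mod_cast hq'
      exact hne ((Nat.prime_dvd_prime_iff_eq hp hq).mp this)
    · exact hboth ⟨hd, (Nat.prime_iff_prime_int.mp hp).dvd_of_dvd_pow hs'⟩
  have hRdvd : ((r.natAbs : ℕ) : ℤ) ∣ r := Int.natAbs_dvd.mpr dvd_rfl
  have hSdvd : ((s.natAbs : ℕ) : ℤ) ∣ s := Int.natAbs_dvd.mpr dvd_rfl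
  have hgcd : Nat.gcd r.natAbs s.natAbs = 1 := by
    have hr' : ((Nat.gcd r.natAbs s.natAbs : ℕ):ℤ) ∣ r :=
      dvd_trans (Int.natCast_dvd_natCast.mpr (Nat.gcd_dvd_left _ _)) hRdvd
    have hs' : ((Nat.gcd r.natAbs s.natAbs : ℕ):ℤ) ∣ s :=
      dvd_trans (Int.natCast_dvd_natCast.mpr (Nat.gcd_dvd_right _ _)) hSdvd
    have h1 : ((Nat.gcd r.natAbs s.natAbs : ℕ):ℤ) ∣ (p:ℤ) := by
      rw [h]
      exact dvd_add (dvd_pow hr' two_ne_zero) ((dvd_pow hs' two_ne_zero).mul_left q)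
    have h2 : Nat.gcd r.natAbs s.natAbs ∣ p := by exact_mod_cast h1
    rcases hp.eq_one_or_self_of_dvd _ h2 with h1' | h1'
    · exact h1'
    · exact absurd (h1' ▸ hr') hpr
  set R := r.natAbs with hR
  set S := s.natAbs with hS
  have hRr : ((R:ℤ))^2 = r^2 := Int.natAbs_sq r
  have hSs : ((S:ℤ))^2 = s^2 := Int.natAbs_sq s
  have hN : p = R^2 + q * S^2 := by
    have : (p:ℤ) = (R:ℤ)^2 + q * (S:ℤ)^2 := by rw [hRr, hSs]; exact h
    exact_mod_cast this
  have h2q0 : ((2:ℤ) : ZMod q) ≠ 0 := by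
    intro h0
    have h1 : (q:ℤ) ∣ 2 := (ZMod.intCast_zmod_eq_zero_iff_dvd 2 q).mp h0
    have h2 : q ∣ 2 := by exact_mod_cast h1
    have := Nat.le_of_dvd (by norm_num) h2
    omega
  have h2p0 : ((2:ℤ) : ZMod p) ≠ 0 := by
    intro h0
    have h1 : (p:ℤ) ∣ 2 := (ZMod.intCast_zmod_eq_zero_iff_dvd 2 p).mp h0
    have h2 : p ∣ 2 := by exact_mod_cast h1
    have := Nat.le_of_dvd (by norm_num) h2
    omega
  have hq2leg := legendreSym.eq_one_or_neg_one q h2q0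
  have hr0q : (r : ZMod q) ≠ 0 := by rw [Ne, ZMod.intCast_zmod_eq_zero_iff_dvd]; exact hqr
  have hrq2 : legendreSym q r ^ 2 = 1 := legendreSym.sq_one q hr0q
  have hx2p2 : legendreSym p 2 ^ 2 = 1 := legendreSym.sq_one p h2p0
  rw [quartic_left p q hq4 hq5 r s h hqr, quartic_right p q hp4 hp5 r s h hpr hps,
    neg_one_pow_eq_leg_two p hp4]
  rcases Nat.even_or_odd S with hSe | hSo
  · -- `S` even, `R` odd
    have hRo : Odd R := by
      rcases Nat.even_or_odd R with hRe | hRo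
      · exfalso
        have h1 : 2 ∣ Nat.gcd R S := Nat.dvd_gcd hRe.two_dvd hSe.two_dvd
        omega
      · exact hRo
    have hS0 : S ≠ 0 := by
      intro h0
      rw [h0] at hN
      simp only [ne_eq, OfNat.ofNat_ne_zero, not_false_eq_true, zero_pow, mul_zero,
        add_zero] at hN
      have hdvd : R ∣ p := ⟨R, by rw [hN]; ring⟩
      rcases hp.eq_one_or_self_of_dvd R hdvd with h1 | h1
      · rw [h1] at hN; omega
      · rw [h1] at hN
        nlinarith [hp5]
    set a := S.factorization 2 with haDef
    set t := S / 2^a with htDef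
    have hSt : 2^a * t = S := Nat.ordProj_mul_ordCompl_eq_self S 2
    have h2t : ¬ 2 ∣ t := Nat.not_dvd_ordCompl Nat.prime_two hS0
    have hto : Odd t := Nat.odd_iff.mpr (by omega)
    have ha1 : 1 ≤ a := Nat.Prime.factorization_pos_of_dvd Nat.prime_two hS0 hSe.two_dvd
    have htS : t ∣ S := ⟨2^a, by rw [← hSt]; ring⟩
    have hts : (t:ℤ) ∣ s := dvd_trans (Int.natCast_dvd_natCast.mpr htS) (by rw [hS]; exact hSdvd)
    have hsp : legendreSym p s = legendreSym p 2 ^ a := by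
      rw [leg_natAbs p hp4 s, ← hS,
        show ((S:ℕ):ℤ) = (2:ℤ)^a * (t:ℤ) by exact_mod_cast congrArg (Nat.cast : ℕ → ℤ) hSt.symm,
        legendreSym.mul, legendreSym_pow]
      have htp : legendreSym p (t:ℤ) = 1 := by
        apply leg_eq_one_of_dvd p hp4 r t hto
        · have : ((p:ℤ)) - r^2 = q * s^2 := by rw [h]; ring
          rw [this]
          exact ((dvd_pow hts two_ne_zero).mul_left q)
        · exact Nat.Coprime.coprime_dvd_right htS hgcd
      rw [htp, mul_one]
    have hrp : legendreSym p r = legendreSym q r := by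
      rw [leg_natAbs p hp4 r, leg_natAbs q hq4 r, ← hR]
      apply leg_eq_leg p q hp4 hq4 s R hRo
      · have : ((p:ℤ)) - q * s^2 = r^2 := by rw [h]; ring
        rw [this, ← hRr]
        exact dvd_pow dvd_rfl two_ne_zero
      · exact (Nat.coprime_comm.mp hgcd)
    have hRHS : legendreSym q 2 ^ S = 1 := by
      rcases hq2leg with e | e <;> rw [e]
      · exact one_pow S
      · exact hSe.neg_one_pow
    rw [hRHS, hsp, hrp]
    have hR2 := odd_sq_mod_eight hRo
    rcases eq_or_lt_of_le ha1 with ha | ha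
    · -- a = 1 : p % 8 = 5
      have hS2 : S^2 = 4 * t^2 := by rw [← hSt, ← ha]; ring
      have hqt : (q * t^2) % 2 = 1 := Nat.odd_iff.mp ((Nat.odd_iff.mpr hq2n).mul (hto.pow))
      have hp8 : p % 8 = 5 := by
        have h3 : p = R^2 + 4*(q*t^2) := by rw [hN, hS2]; ring
        set A := R^2
        set X := q*t^2
        omega
      have h2p : legendreSym p 2 = -1 := by
        rw [legendreSym.at_two (by omega), ZMod.χ₈_nat_eq_if_mod_eight]
        norm_num [hp8, hp2]
      rw [h2p, ← ha]
      linear_combination hrq2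
    · -- 2 ≤ a : p % 8 = 1
      obtain ⟨v, hv⟩ : 4 ∣ S := dvd_trans (by
        have : (2:ℕ)^2 ∣ 2^a := pow_dvd_pow 2 (by omega)
        simpa using this) (Nat.ordProj_dvd S 2)
      have hp8 : p % 8 = 1 := by
        have h3 : p = R^2 + 16*(q*v^2) := by rw [hN, hv]; ring
        set A := R^2
        set X := q*v^2
        omega
      have h2p : legendreSym p 2 = 1 := by
        rw [legendreSym.at_two (by omega), ZMod.χ₈_nat_eq_if_mod_eight]
        norm_num [hp8, hp2]
      rw [h2p, one_pow]
      linear_combination hrq2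
  · -- `S` odd, `R` even
    have hRe : Even R := by
      rcases Nat.even_or_odd R with hRe | hRo
      · exact hRe
      · exfalso
        have h1 : R^2 % 2 = 1 := Nat.odd_iff.mp hRo.pow
        have h2 : (q * S^2) % 2 = 1 := Nat.odd_iff.mp ((Nat.odd_iff.mpr hq2n).mul hSo.pow)
        have h3 : p = R^2 + q*S^2 := hN
        set A := R^2
        set X := q*S^2
        omega
    have hR0 : R ≠ 0 := by
      intro h0
      rw [h0] at hN
      simp only [ne_eq, OfNat.ofNat_ne_zero, not_false_eq_true, zero_pow, zero_add] at hN
      have hdvd : q ∣ p := ⟨S^2, hN⟩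
      exact hne ((Nat.prime_dvd_prime_iff_eq hq hp).mp hdvd).symm
    set a := R.factorization 2 with haDef
    set u := R / 2^a with huDef
    have hRu : 2^a * u = R := Nat.ordProj_mul_ordCompl_eq_self R 2
    have h2u : ¬ 2 ∣ u := Nat.not_dvd_ordCompl Nat.prime_two hR0
    have huo : Odd u := Nat.odd_iff.mpr (by omega)
    have ha1 : 1 ≤ a := Nat.Prime.factorization_pos_of_dvd Nat.prime_two hR0 hRe.two_dvd
    have huR : u ∣ R := ⟨2^a, by rw [← hRu]; ring⟩
    have hur : (u:ℤ) ∣ r := dvd_trans (Int.natCast_dvd_natCast.mpr huR) (by rw [hR]; exact hRdvd)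
    have hSsdvd : (S:ℤ) ∣ s := by rw [hS]; exact hSdvd
    have hsp : legendreSym p s = 1 := by
      rw [leg_natAbs p hp4 s, ← hS]
      apply leg_eq_one_of_dvd p hp4 r S hSo
      · have : ((p:ℤ)) - r^2 = q * s^2 := by rw [h]; ring
        rw [this]
        exact ((dvd_pow hSsdvd two_ne_zero).mul_left q)
      · exact hgcd
    have hup : legendreSym p (u:ℤ) = legendreSym q (u:ℤ) := by
      apply leg_eq_leg p q hp4 hq4 s u huo
      · have : ((p:ℤ)) - q * s^2 = r^2 := by rw [h]; ring
        rw [this]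
        exact dvd_pow hur two_ne_zero
      · exact Nat.Coprime.coprime_dvd_right huR (Nat.coprime_comm.mp hgcd)
    have hcastR : ((R:ℕ):ℤ) = (2:ℤ)^a * (u:ℤ) := by
      exact_mod_cast congrArg (Nat.cast : ℕ → ℤ) hRu.symm
    have hrp : legendreSym p r = legendreSym p 2 ^ a * legendreSym p (u:ℤ) := by
      rw [leg_natAbs p hp4 r, ← hR, hcastR, legendreSym.mul, legendreSym_pow]
    have hrq : legendreSym q r = legendreSym q 2 ^ a * legendreSym q (u:ℤ) := by
      rw [leg_natAbs q hq4 r, ← hR, hcastR, legendreSym.mul, legendreSym_pow]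
    have hqu : ¬ (q:ℤ) ∣ (u:ℤ) := by
      intro hd
      have h1 : q ∣ u := by exact_mod_cast hd
      have h2 : (q:ℤ) ∣ (R:ℤ) := Int.natCast_dvd_natCast.mpr (h1.trans huR)
      exact hqr (h2.trans (by rw [hR] at h2 ⊢; exact hRdvd))
    have hRHS : legendreSym q 2 ^ S = legendreSym q 2 := by
      rcases hq2leg with e | e <;> rw [e]
      · exact one_pow S
      · exact hSo.neg_one_pow
    have hu0q : ((u:ℤ) : ZMod q) ≠ 0 := by
      rw [Ne, ZMod.intCast_zmod_eq_zero_iff_dvd]; exact hqu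
    have huq2 : legendreSym q (u:ℤ) ^ 2 = 1 := legendreSym.sq_one q hu0q
    rw [hRHS, hsp, mul_one, hrp, hrq, hup]
    have key : ∀ x y U : ℤ, x^2 = 1 → y^2 = 1 → U^2 = 1 → x = y →
        x^a * U * (y * (y^a * U)) = x := by
      intro x y U hx2 hy2 hU2 hxy
      subst hxy
      calc x^a * U * (x * (x^a * U)) = (x^2)^a * U^2 * x := by ring
        _ = x := by rw [hx2, hU2]; ring
    rcases eq_or_lt_of_le ha1 with ha | ha
    · -- a = 1
      rw [← ha]
      linear_combination (legendreSym q 2 * legendreSym q (u:ℤ)^2) * hx2p2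
        + legendreSym q 2 * huq2
    · -- 2 ≤ a
      have hS2 := odd_sq_mod_eight hSo
      obtain ⟨n, hn⟩ : ∃ n, S^2 = 8*n+1 := ⟨S^2/8, by omega⟩
      obtain ⟨v, hv⟩ : 4 ∣ R := dvd_trans (by
          have : (2:ℕ)^2 ∣ 2^a := pow_dvd_pow 2 (by omega)
          simpa using this) (Nat.ordProj_dvd R 2)
      have hp8 : p % 8 = q % 8 := by
        have h3 : p = 16*v^2 + 8*(q*n) + q := by rw [hN, hv, hn]; ring
        set A := v^2
        set X := q*n
        omega
      have hx : legendreSym p 2 = legendreSym q 2 := leg_two_congr p q hp8 hp2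
      exact key _ _ _ (legendreSym.sq_one q h2q0) hx2p2 huq2 hx.symm
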